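/- Fix an integer g ≥ 1 and two distinct indices r, s ∈ {1,…,2g+1}. Then, in the polynomial ring ℤ[e₁,…,e_{2g+1}], the polynomial F(e_r, e_s), obtained by evaluating the Kleinian 2-polar F(x,z) at x = e_r and z = e_s, is divisible by (e_r − e_s)². -/
import Mathlib


/- STATEMENT 3: in ℤ[e₁,…,e_{2g+1}], the Kleinian 2-polar F(x,z) evaluated at
   x = e_r, z = e_s (r ≠ s) is divisible by (e_r − e_s)². -/

open MvPolynomial Finset

noncomputable section

/-- The coefficients λ_m defined by `4∏_{j}(x−e_j) = 4x^{2g+1} + Σ_{i=0}^{2g} λᵢ xⁱ`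
(with λ_{2g+1} = 4), i.e. `λ_m = 4(−1)^{2g+1−m} σ_{2g+1−m}(e₁,…,e_{2g+1})`,
as a polynomial in ℤ[e₁,…,e_{2g+1}]. -/
def lamZ (g : ℕ) (m : ℕ) : MvPolynomial (Fin (2 * g + 1)) ℤ :=
  4 * (-1) ^ (2 * g + 1 - m) *
    ((Finset.univ : Finset (Fin (2 * g + 1))).val.map X).esymm (2 * g + 1 - m)

/-- The Kleinian 2-polar `F(x,z) = Σ_{k=0}^{g} x^k z^k (2λ_{2k} + λ_{2k+1}(x+z))`,
evaluated at elements `x, z` of ℤ[e₁,…,e_{2g+1}]. -/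
def kleinPolarZ (g : ℕ) (x z : MvPolynomial (Fin (2 * g + 1)) ℤ) :
    MvPolynomial (Fin (2 * g + 1)) ℤ :=
  ∑ k ∈ Finset.range (g + 1),
    x ^ k * z ^ k * (2 * lamZ g (2 * k) + lamZ g (2 * k + 1) * (x + z))

/-- Per-term divisibility identity in any commutative ring. -/
lemma klein_term_dvd {R : Type*} [CommRing R] (x z A B : R) (k : ℕ) :
    (x - z) ^ 2 ∣ x ^ k * z ^ k * (2 * A + B * (x + z))
      - (A * x ^ (2 * k) + B * x ^ (2 * k + 1))
      - (A * z ^ (2 * k) + B * z ^ (2 * k + 1)) := by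
  obtain ⟨c, hc⟩ := sub_dvd_pow_sub_pow x z k
  obtain ⟨d, hd⟩ := sub_dvd_pow_sub_pow x z (k + 1)
  have key : x ^ k * z ^ k * (2 * A + B * (x + z))
      - (A * x ^ (2 * k) + B * x ^ (2 * k + 1))
      - (A * z ^ (2 * k) + B * z ^ (2 * k + 1))
      = -A * (x ^ k - z ^ k) ^ 2
        - B * (x ^ k - z ^ k) * (x ^ (k + 1) - z ^ (k + 1)) := by
    ring
  rw [key, hc, hd]
  exact ⟨-A * c ^ 2 - B * c * d, by ring⟩

lemma sum_range_two_mul {M : Type*} [AddCommMonoid M] (n : ℕ) (f : ℕ → M) :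
    ∑ i ∈ Finset.range (2 * n), f i
      = ∑ k ∈ Finset.range n, (f (2 * k) + f (2 * k + 1)) := by
  induction n with
  | zero => simp
  | succ n ih =>
      rw [Nat.mul_succ, Finset.sum_range_succ, Finset.sum_range_succ,
        Finset.sum_range_succ, ih, add_assoc]

lemma fsum_eq_zero (g : ℕ) (r : Fin (2 * g + 1)) :
    ∑ i ∈ Finset.range (2 * g + 2),
      lamZ g i * (X r : MvPolynomial (Fin (2 * g + 1)) ℤ) ^ i = 0 := by
  set t : MvPolynomial (Fin (2 * g + 1)) ℤ := X r with ht
  set s : Multiset (MvPolynomial (Fin (2 * g + 1)) ℤ) :=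
    (Finset.univ : Finset (Fin (2 * g + 1))).val.map X with hs
  have hcard : Multiset.card s = 2 * g + 1 := by simp [hs]
  have hv := Multiset.prod_X_sub_X_eq_sum_esymm s
  have hev := congrArg (Polynomial.eval t) hv
  rw [← Polynomial.coe_evalRingHom, map_multiset_prod] at hev
  have hL : ((s.map fun u => Polynomial.X - Polynomial.C u).map
      (Polynomial.evalRingHom t)).prod = 0 := by
    rw [Multiset.map_map, hs, Multiset.map_map, ← Finset.prod_eq_multiset_prod]
    exact Finset.prod_eq_zero (Finset.mem_univ r) (by simp [ht])
  rw [hL, hcard] at hev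
  have hev2 : ∑ j ∈ Finset.range (2 * g + 2),
      ((-1 : MvPolynomial (Fin (2 * g + 1)) ℤ) ^ j * (s.esymm j * t ^ (2 * g + 1 - j))) = 0 := by
    simpa using hev.symm
  calc ∑ i ∈ Finset.range (2 * g + 2), lamZ g i * t ^ i
      = ∑ j ∈ Finset.range (2 * g + 2),
          lamZ g (2 * g + 2 - 1 - j) * t ^ (2 * g + 2 - 1 - j) :=
        (Finset.sum_range_reflect (fun i => lamZ g i * t ^ i) (2 * g + 2)).symm
    _ = ∑ j ∈ Finset.range (2 * g + 2),
          4 * ((-1 : MvPolynomial (Fin (2 * g + 1)) ℤ) ^ j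
            * (s.esymm j * t ^ (2 * g + 1 - j))) := by
        refine Finset.sum_congr rfl fun j hj => ?_
        have hj' : j ≤ 2 * g + 1 := by
          have := Finset.mem_range.mp hj; omega
        have h1 : 2 * g + 2 - 1 - j = 2 * g + 1 - j := by omega
        have h2 : 2 * g + 1 - (2 * g + 1 - j) = j := by omega
        rw [h1, lamZ, h2, hs]
        ring
    _ = 4 * ∑ j ∈ Finset.range (2 * g + 2),
          ((-1 : MvPolynomial (Fin (2 * g + 1)) ℤ) ^ j
            * (s.esymm j * t ^ (2 * g + 1 - j))) := by
        rw [Finset.mul_sum]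
    _ = 0 := by rw [hev2, mul_zero]

theorem klein_polar_divisible (g : ℕ) (hg : 1 ≤ g)
    (r s : Fin (2 * g + 1)) (hrs : r ≠ s) :
    ((X r - X s : MvPolynomial (Fin (2 * g + 1)) ℤ)) ^ 2 ∣
      kleinPolarZ g (X r) (X s) := by
  set F : MvPolynomial (Fin (2 * g + 1)) ℤ → MvPolynomial (Fin (2 * g + 1)) ℤ :=
    fun t => ∑ k ∈ Finset.range (g + 1),
      (lamZ g (2 * k) * t ^ (2 * k) + lamZ g (2 * k + 1) * t ^ (2 * k + 1)) with hF
  have hFzero : ∀ u : Fin (2 * g + 1), F (X u) = 0 := by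
    intro u
    have h2 : 2 * (g + 1) = 2 * g + 2 := by omega
    have := sum_range_two_mul (g + 1) (fun i => lamZ g i * (X u : MvPolynomial (Fin (2 * g + 1)) ℤ) ^ i)
    rw [h2, fsum_eq_zero g u] at this
    rw [hF]
    exact this.symm
  have hdvd : (X r - X s : MvPolynomial (Fin (2 * g + 1)) ℤ) ^ 2 ∣
      kleinPolarZ g (X r) (X s) - F (X r) - F (X s) := by
    rw [kleinPolarZ, hF, ← Finset.sum_sub_distrib, ← Finset.sum_sub_distrib]
    exact Finset.dvd_sum fun k _ =>
      klein_term_dvd (X r) (X s) (lamZ g (2 * k)) (lamZ g (2 * k + 1)) k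
  rwa [hFzero r, hFzero s, sub_zero, sub_zero] at hdvd
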